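/- For every n ≥ 3, the n reflections in the dihedral group D₂ₙ of order 2n form a single automorphism orbit, and n > (2n − 1)/2. Consequently, every function f : D₂ₙ → D₂ₙ agrees with some affine map on at least 2 elements. -/

import Mathlib

open DihedralGroup

/-- The automorphism of `DihedralGroup n` fixing rotations and shifting reflections by `c`. -/
def shiftAut (n : ℕ) (c : ZMod n) : DihedralGroup n ≃* DihedralGroup n where
  toFun x := match x with
    | .r i => .r i
    | .sr i => .sr (i + c)
  invFun x := match x with
    | .r i => .r i
    | .sr i => .sr (i - c)
  left_inv x := by cases x <;> simp
  right_inv x := by cases x <;> simp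
  map_mul' x y := by
    cases x <;> cases y <;> simp [r_mul_r, r_mul_sr, sr_mul_r, sr_mul_sr] <;> ring

theorem stmt_11 (n : ℕ) (hn : 3 ≤ n) :
    (∃ u : DihedralGroup n,
      MulAction.orbit (MulAut (DihedralGroup n)) u =
        {x : DihedralGroup n | ∃ i, x = DihedralGroup.sr i}) ∧
    Set.ncard {x : DihedralGroup n | ∃ i, x = DihedralGroup.sr i} = n ∧
    2 * n - 1 < 2 * n ∧
    ∀ f : DihedralGroup n → DihedralGroup n,
      ∃ (a : DihedralGroup n) (φ : DihedralGroup n →* DihedralGroup n),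
        2 ≤ Set.ncard {x | f x = a * φ x} := by
  haveI : NeZero n := ⟨by omega⟩
  have h2 : (2 : ZMod n) ≠ 0 := by
    intro h
    have hd : n ∣ 2 := by
      rw [show (2 : ZMod n) = ((2 : ℕ) : ZMod n) by norm_cast] at h
      rwa [
        ZMod.natCast_eq_zero_iff] at h
    exact absurd (Nat.le_of_dvd (by norm_num) hd) (by omega)
  set O : Set (DihedralGroup n) := {x : DihedralGroup n | ∃ i, x = sr i} with hO
  -- membership characterization
  have hmem : ∀ x : DihedralGroup n, x ∈ O ↔ ∃ i, x = sr i := fun x => Iff.rfl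
  -- part 1 : orbit
  have horbit : MulAction.orbit (MulAut (DihedralGroup n)) (sr (0 : ZMod n)) = O := by
    ext x
    constructor
    · rintro ⟨φ, rfl⟩
      show ∃ i, φ • (sr 0) = sr i
      rw [MulAut.smul_def]
      rcases hx : φ (sr 0) with j | j
      · -- impossible : r j would be central
        exfalso
        have hj2 : j + j = 0 := by
          have : φ (sr 0 * sr 0) = DihedralGroup.r j * DihedralGroup.r j := by
            rw [map_mul, hx]
          rw [sr_mul_sr, sub_self, ← one_def, map_one, r_mul_r, one_def] at this
          exact (r.injEq _ _).mp this.symm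
        have hjc : ∀ g : DihedralGroup n, DihedralGroup.r j * g = g * DihedralGroup.r j := by
          intro g
          rcases g with i | i
          · rw [r_mul_r, r_mul_r, add_comm]
          · rw [r_mul_sr, sr_mul_r]
            congr 1
            have : j = -j := by linear_combination hj2
            rw [sub_eq_add_neg, ← this]
        have hc : sr (0 : ZMod n) * DihedralGroup.r 1 = DihedralGroup.r 1 * sr 0 := by
          have := hjc (φ (DihedralGroup.r 1))
          have h' : φ (sr 0 * DihedralGroup.r 1) = φ (DihedralGroup.r 1 * sr 0) := by
            rw [map_mul, map_mul, hx, this]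
          exact φ.injective h'
        rw [sr_mul_r, r_mul_sr, zero_add, zero_sub] at hc
        have : (1 : ZMod n) = -1 := (sr.injEq _ _).mp hc
        exact h2 (by linear_combination this)
      · exact ⟨j, rfl⟩
    · rintro ⟨i, rfl⟩
      exact ⟨shiftAut n i, by show sr (0 + i) = sr i; rw [zero_add]⟩
  have hinj : Function.Injective (sr (n := n)) := fun a b h => by injection h
  have hOr : O = Set.range sr := by ext x; simp [hO, Set.range, eq_comm]
  have hcard : Set.ncard O = n := by
    rw [hOr, Set.ncard_eq_toFinset_card', Set.toFinset_range,
      Finset.card_image_of_injective _ hinj]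
    simp [ZMod.card]
  refine ⟨⟨sr 0, horbit⟩, hcard, by omega, ?_⟩
  intro f
  by_cases hA : ∃ x ∈ O, (f 1)⁻¹ * f x ∈ O
  · -- case A : use a transitive automorphism
    obtain ⟨x, ⟨i, rfl⟩, ⟨k, hk⟩⟩ := hA
    refine ⟨f 1, (shiftAut n (k - i)).toMonoidHom, ?_⟩
    have hsub : {(1 : DihedralGroup n), sr i} ⊆ {x | f x = f 1 * (shiftAut n (k - i)) x} := by
      intro y hy
      rcases hy with rfl | rfl
      · show f 1 = f 1 * (shiftAut n (k - i)) 1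
        rw [map_one, mul_one]
      · show f (sr i) = f 1 * (shiftAut n (k - i)) (sr i)
        show f (sr i) = f 1 * sr (i + (k - i))
        have : i + (k - i) = k := by ring
        rw [this, ← hk, mul_inv_cancel_left]
    calc 2 = Set.ncard {(1 : DihedralGroup n), sr i} := by
            rw [Set.ncard_pair]
            intro h
            rw [one_def] at h
            cases h
      _ ≤ _ := Set.ncard_le_ncard hsub (Set.toFinite _)
  · -- case B : pigeonhole, f not injective on O ∪ {1}
    push_neg at hA
    have hone : (1 : DihedralGroup n) ∉ O := by
      rintro ⟨i, hi⟩
      rw [one_def] at hi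
      cases hi
    have hmaps : ∀ y ∈ insert (1 : DihedralGroup n) O, (f 1)⁻¹ * f y ∈ Oᶜ := by
      intro y hy
      rcases hy with rfl | hy
      · simpa using hone
      · exact hA y hy
    have hclt : Set.ncard (Oᶜ : Set (DihedralGroup n)) < Set.ncard (insert (1 : DihedralGroup n) O) := by
      have := Set.ncard_add_ncard_compl O
      rw [hcard, DihedralGroup.nat_card] at this
      rw [Set.ncard_insert_of_notMem hone, hcard]
      omega
    obtain ⟨x, -, y, -, hxy, hfxy⟩ :=
      Set.exists_ne_map_eq_of_ncard_lt_of_maps_to hclt hmaps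
    have hfeq : f x = f y := by
      have := mul_left_cancel hfxy
      exact this
    refine ⟨f x, 1, ?_⟩
    have hsub : {x, y} ⊆ {z | f z = f x * (1 : DihedralGroup n →* DihedralGroup n) z} := by
      intro z hz
      rcases hz with rfl | rfl
      · show f z = f z * 1; rw [mul_one]
      · show f z = f x * 1; rw [mul_one, hfeq]
    calc 2 = Set.ncard {x, y} := (Set.ncard_pair hxy).symm
      _ ≤ _ := Set.ncard_le_ncard hsub (Set.toFinite _)
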